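/- Let D = D(Γ, (g_i), (χ_i), (a_{ij})) be a datum of finite Cartan type and suppose the vertices i and j are linkable, i.e. i ≁ j, g_i g_j ≠ 1, and χ_i χ_j = ε. Then q_{ii} = q_{jj}^{−1}. -/
import Mathlib


open scoped BigOperators

/-- `a` is a Cartan matrix of finite type: diagonal entries `2`, off-diagonal entries `≤ 0`,
`a i j = 0 ↔ a j i = 0`, and there are positive integers `d i` symmetrizing `a` such that the
symmetrized matrix is positive definite. -/
def IsFiniteCartanMatrix {θ : ℕ} (a : Fin θ → Fin θ → ℤ) : Prop :=
  (∀ i, a i i = 2) ∧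
  (∀ i j, i ≠ j → a i j ≤ 0) ∧
  (∀ i j, (a i j = 0 ↔ a j i = 0)) ∧
  ∃ d : Fin θ → ℤ, (∀ i, 0 < d i) ∧ (∀ i j, d i * a i j = d j * a j i) ∧
    (Matrix.of fun i j => ((d i * a i j : ℤ) : ℝ)).PosDef

/-- The Dynkin graph of the Cartan matrix `a`: an edge between `i ≠ j` iff `a i j ≠ 0`. -/
def dynkinGraph {θ : ℕ} (a : Fin θ → Fin θ → ℤ) : SimpleGraph (Fin θ) :=
  SimpleGraph.fromRel fun i j => a i j ≠ 0

/-- `D(Γ, (g i), (χ i), (a i j))` is a datum of finite Cartan type: with `q i j = χ j (g i)`,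
one has `q i j * q j i = (q i i) ^ (a i j)` and `q i i ≠ 1`. -/
def IsCartanDatum {k : Type*} [Field k] {Γ : Type*} [CommGroup Γ] {θ : ℕ}
    (g : Fin θ → Γ) (χ : Fin θ → Γ →* kˣ) (a : Fin θ → Fin θ → ℤ) : Prop :=
  IsFiniteCartanMatrix a ∧
  (∀ i j, χ j (g i) * χ i (g j) = χ i (g i) ^ (a i j)) ∧
  (∀ i, χ i (g i) ≠ 1)

/-- Vertices `i, j` are linkable: `i ≁ j` (they lie in different connected components of the
Dynkin graph), `g i * g j ≠ 1`, and `χ i * χ j = ε`. -/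
def Linkable {k : Type*} [Field k] {Γ : Type*} [CommGroup Γ] {θ : ℕ}
    (g : Fin θ → Γ) (χ : Fin θ → Γ →* kˣ) (a : Fin θ → Fin θ → ℤ) (i j : Fin θ) : Prop :=
  ¬ (dynkinGraph a).Reachable i j ∧ g i * g j ≠ 1 ∧ χ i * χ j = 1

theorem statement1 {k : Type*} [Field k] [IsAlgClosed k] [CharZero k]
    {Γ : Type*} [CommGroup Γ] {θ : ℕ}
    (g : Fin θ → Γ) (χ : Fin θ → Γ →* kˣ) (a : Fin θ → Fin θ → ℤ)
    (hD : IsCartanDatum g χ a)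
    (i j : Fin θ) (hlink : Linkable g χ a i j) :
    χ i (g i) = (χ j (g j))⁻¹ := by
  obtain ⟨hreach, -, hchi⟩ := hlink
  have hne : i ≠ j := fun h => hreach (h ▸ SimpleGraph.Reachable.refl i)
  have haij : a i j = 0 := by
    by_contra h
    exact hreach ⟨SimpleGraph.Walk.cons
      (by exact ⟨hne, Or.inl h⟩ : (dynkinGraph a).Adj i j) SimpleGraph.Walk.nil⟩
  have h1 : χ i (g i) * χ j (g i) = 1 := by
    have := congrArg (fun f : Γ →* kˣ => f (g i)) hchi
    simpa using this
  have h2 : χ i (g j) * χ j (g j) = 1 := by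
    have := congrArg (fun f : Γ →* kˣ => f (g j)) hchi
    simpa using this
  have h3 := hD.2.1 i j
  rw [haij, zpow_zero] at h3
  have hji : χ j (g i) = (χ i (g i))⁻¹ := eq_inv_of_mul_eq_one_right h1
  have hij : χ i (g j) = (χ j (g j))⁻¹ := eq_inv_of_mul_eq_one_left h2
  rw [hji, hij] at h3
  have : (χ i (g i) * χ j (g j))⁻¹ = 1 := by rw [mul_inv]; exact h3
  have h4 : χ i (g i) * χ j (g j) = 1 := by simpa using congrArg (·⁻¹) this
  exact eq_inv_of_mul_eq_one_left h4
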